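/- Exponential formula (Theorem 1): let (S, ⊕, σ, ε) be a locally finite SFD partial semigroup, R a commutative ℚ-algebra, and c : S → R a multiplicative equivariant statistics. Then in the ring R[[z]] of formal power series, EGF(S; z) = (c(ε) − 1)·1 + exp(EGF(atoms(S); z)), where exp(g) := ∑_{k≥0} gᵏ/k! (well defined since EGF(atoms(S); z) has zero constant term). -/

import Mathlib

/-- A square-free decomposable (SFD) partial semigroup. -/
structure SFD (S : Type*) where
  eps : S
  op : S → S → S
  supp : S → Finset ℕ+
  supp_eq_empty : ∀ ω : S, supp ω = ∅ ↔ ω = eps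
  eps_op : ∀ ω : S, op eps ω = ω
  op_eps : ∀ ω : S, op ω eps = ω
  supp_op : ∀ ω₁ ω₂ : S, supp ω₁ ∩ supp ω₂ = ∅ →
      supp (op ω₁ ω₂) = supp ω₁ ∪ supp ω₂
  op_comm : ∀ ω₁ ω₂ : S, supp ω₁ ∩ supp ω₂ = ∅ → op ω₁ ω₂ = op ω₂ ω₁
  op_assoc : ∀ ω₁ ω₂ ω₃ : S, supp ω₁ ∩ supp ω₂ = ∅ →
      supp ω₁ ∩ supp ω₃ = ∅ → supp ω₂ ∩ supp ω₃ = ∅ →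
      op (op ω₁ ω₂) ω₃ = op ω₁ (op ω₂ ω₃)
  levi : ∀ a b c d : S, supp a ∩ supp b = ∅ → supp c ∩ supp d = ∅ →
      op a b = op c d →
      ∃ w11 w12 w21 w22 : S,
        supp w11 ∩ supp w12 = ∅ ∧ supp w21 ∩ supp w22 = ∅ ∧
        supp w11 ∩ supp w21 = ∅ ∧ supp w12 ∩ supp w22 = ∅ ∧
        a = op w11 w12 ∧ b = op w21 w22 ∧ c = op w11 w21 ∧ d = op w12 w22

/-- Iterated sum of a list of elements. -/
def SFD.opList {S : Type*} (P : SFD S) : List S → S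
  | [] => P.eps
  | a :: l => P.op a (P.opList l)

/-- Iterated sum of a finite family indexed by `Fin n`. -/
def SFD.opFam {S : Type*} (P : SFD S) {n : ℕ} (ω : Fin n → S) : S :=
  P.opList (List.ofFn ω)

/-- An atom: a nonunit element which cannot be split. -/
def SFD.IsAtom {S : Type*} (P : SFD S) (ω : S) : Prop :=
  ω ≠ P.eps ∧ ∀ ω₁ ω₂ : S, P.supp ω₁ ∩ P.supp ω₂ = ∅ → ω = P.op ω₁ ω₂ →
    ω₁ = P.eps ∨ ω₂ = P.eps

/-- The interval `[1..n]` as a finite set of positive integers. -/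
def pInterval (n : ℕ) : Finset ℕ+ :=
  (Finset.range n).image (fun i => ⟨i + 1, Nat.succ_pos i⟩)


/-- The exponential generating series of a subset `X ⊆ S` with respect to a
statistics `c`: `EGF(X; z) = ∑_{n ≥ 0} c(X_{[1..n]}) zⁿ/n!`. -/
noncomputable def EGF {S : Type*} {R : Type*} [CommRing R] [Algebra ℚ R]
    (P : SFD S) (c : S → R) (X : Set S) : PowerSeries R :=
  PowerSeries.mk fun n =>
    ((n.factorial : ℚ)⁻¹) • ∑ᶠ ω ∈ {w ∈ X | P.supp w = pInterval n}, c ω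

/-- The exponential `exp(g) = ∑_{k ≥ 0} gᵏ/k!` of a formal power series,
computed coefficientwise (the sum of the `n`-th coefficients of the `gᵏ/k!`
has finite support when `g` has zero constant term). -/
noncomputable def expPS {R : Type*} [CommRing R] [Algebra ℚ R]
    (g : PowerSeries R) : PowerSeries R :=
  PowerSeries.mk fun n =>
    ∑ᶠ k : ℕ, ((k.factorial : ℚ)⁻¹) • PowerSeries.coeff n (g ^ k)

namespace ExpAux

open Finset

lemma card_pInterval (n : ℕ) : (pInterval n).card = n := by
  unfold pInterval
  refine (Finset.card_image_of_injective _ ?_).trans (Finset.card_range n)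
  intro a b h
  simpa using congrArg (fun x : ℕ+ => (x : ℕ)) h

lemma pInterval_zero : pInterval 0 = ∅ := by simp [pInterval]; exact Finset.image_empty _

lemma pInterval_nonempty {n : ℕ} (hn : n ≠ 0) : (pInterval n).Nonempty := by
  refine ⟨⟨1, one_pos⟩, ?_⟩
  exact Finset.mem_image.mpr ⟨0, Finset.mem_range.mpr (Nat.pos_of_ne_zero hn), rfl⟩

variable {S : Type*} (P : SFD S)

lemma supp_eps : P.supp P.eps = ∅ := (P.supp_eq_empty _).mpr rfl

lemma atom_supp_ne {ω : S} (h : P.IsAtom ω) : P.supp ω ≠ ∅ :=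
  fun he => h.1 ((P.supp_eq_empty ω).mp he)

/-- Uniqueness of splitting off the atom containing a given point. -/
lemma unique_split {x : ℕ+} {a₁ r₁ a₂ r₂ : S}
    (ha₁ : P.IsAtom a₁) (ha₂ : P.IsAtom a₂)
    (hx₁ : x ∈ P.supp a₁) (hx₂ : x ∈ P.supp a₂)
    (hd₁ : P.supp a₁ ∩ P.supp r₁ = ∅) (hd₂ : P.supp a₂ ∩ P.supp r₂ = ∅)
    (heq : P.op a₁ r₁ = P.op a₂ r₂) : a₁ = a₂ ∧ r₁ = r₂ := by
  obtain ⟨w11, w12, w21, w22, d1, d2, d3, d4, e1, e2, e3, e4⟩ :=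
    P.levi _ _ _ _ hd₁ hd₂ heq
  rcases ha₁.2 _ _ d1 e1 with h11 | h12
  · exfalso
    have ha : a₁ = w12 := by rw [e1, h11, P.eps_op]
    have hx12 : x ∈ P.supp w12 := ha ▸ hx₁
    have hsr₂ : P.supp r₂ = P.supp w12 ∪ P.supp w22 := by rw [e4, P.supp_op _ _ d4]
    have : x ∈ P.supp a₂ ∩ P.supp r₂ :=
      Finset.mem_inter.mpr ⟨hx₂, hsr₂ ▸ Finset.mem_union_left _ hx12⟩
    rw [hd₂] at this
    exact absurd this (Finset.notMem_empty x)
  · rcases ha₂.2 _ _ d3 e3 with h11 | h21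
    · exfalso
      have ha : a₂ = w21 := by rw [e3, h11, P.eps_op]
      have hx21 : x ∈ P.supp w21 := ha ▸ hx₂
      have hsr₁ : P.supp r₁ = P.supp w21 ∪ P.supp w22 := by rw [e2, P.supp_op _ _ d2]
      have : x ∈ P.supp a₁ ∩ P.supp r₁ :=
        Finset.mem_inter.mpr ⟨hx₁, hsr₁ ▸ Finset.mem_union_left _ hx21⟩
      rw [hd₁] at this
      exact absurd this (Finset.notMem_empty x)
    · constructor
      · rw [e1, h12, P.op_eps, e3, h21, P.op_eps]
      · rw [e2, h21, P.eps_op, e4, h12, P.eps_op]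

/-- Existence of splitting off an atom containing a given point. -/
lemma exists_split : ∀ n : ℕ, ∀ ω : S, (P.supp ω).card ≤ n → ∀ x ∈ P.supp ω,
    ∃ a r : S, P.IsAtom a ∧ x ∈ P.supp a ∧ P.supp a ∩ P.supp r = ∅ ∧ ω = P.op a r := by
  intro n
  induction n with
  | zero =>
    intro ω hcard x hx
    rw [Nat.le_zero, Finset.card_eq_zero] at hcard
    exact absurd (hcard ▸ hx) (Finset.notMem_empty x)
  | succ n ih =>
    intro ω hcard x hx
    have hne : ω ≠ P.eps := by
      intro h
      rw [h, supp_eps] at hx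
      exact Finset.notMem_empty x hx
    by_cases hat : P.IsAtom ω
    · refine ⟨ω, P.eps, hat, hx, ?_, (P.op_eps ω).symm⟩
      rw [supp_eps, Finset.inter_empty]
    · rw [SFD.IsAtom, not_and] at hat
      push_neg at hat
      obtain ⟨ω₁, ω₂, hd, hop, h1, h2⟩ := hat hne
      have hsupp : P.supp ω = P.supp ω₁ ∪ P.supp ω₂ := by rw [hop, P.supp_op _ _ hd]
      -- wlog x ∈ supp ω₁
      have key : ∀ ω₁ ω₂ : S, P.supp ω₁ ∩ P.supp ω₂ = ∅ → ω = P.op ω₁ ω₂ →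
          ω₂ ≠ P.eps → x ∈ P.supp ω₁ →
          ∃ a r : S, P.IsAtom a ∧ x ∈ P.supp a ∧ P.supp a ∩ P.supp r = ∅ ∧ ω = P.op a r := by
        intro ω₁ ω₂ hd hop h2 hx1
        have hsupp : P.supp ω = P.supp ω₁ ∪ P.supp ω₂ := by rw [hop, P.supp_op _ _ hd]
        have hne2 : (P.supp ω₂).Nonempty :=
          Finset.nonempty_iff_ne_empty.mpr (fun h => h2 ((P.supp_eq_empty ω₂).mp h))
        have hcard1 : (P.supp ω₁).card ≤ n := by
          have hdisj : Disjoint (P.supp ω₁) (P.supp ω₂) :=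
            Finset.disjoint_iff_inter_eq_empty.mpr hd
          have hcu := Finset.card_union_of_disjoint hdisj
          rw [hsupp, hcu] at hcard
          have h1 : 1 ≤ (P.supp ω₂).card := Finset.card_pos.mpr hne2
          omega
        obtain ⟨a, r, hat, hxa, hdar, hsplit⟩ := ih ω₁ hcard1 x hx1
        have hsr : P.supp ω₁ = P.supp a ∪ P.supp r := by rw [hsplit, P.supp_op _ _ hdar]
        have hsub_a : P.supp a ⊆ P.supp ω₁ := hsr ▸ Finset.subset_union_left
        have hsub_r : P.supp r ⊆ P.supp ω₁ := hsr ▸ Finset.subset_union_right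
        have hda2 : P.supp a ∩ P.supp ω₂ = ∅ := by
          apply Finset.eq_empty_of_forall_notMem
          intro y hy
          rw [Finset.mem_inter] at hy
          have : y ∈ P.supp ω₁ ∩ P.supp ω₂ :=
            Finset.mem_inter.mpr ⟨hsub_a hy.1, hy.2⟩
          rw [hd] at this; exact Finset.notMem_empty y this
        have hdr2 : P.supp r ∩ P.supp ω₂ = ∅ := by
          apply Finset.eq_empty_of_forall_notMem
          intro y hy
          rw [Finset.mem_inter] at hy
          have : y ∈ P.supp ω₁ ∩ P.supp ω₂ :=
            Finset.mem_inter.mpr ⟨hsub_r hy.1, hy.2⟩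
          rw [hd] at this; exact Finset.notMem_empty y this
        refine ⟨a, P.op r ω₂, hat, hxa, ?_, ?_⟩
        · rw [P.supp_op _ _ hdr2, Finset.inter_union_distrib_left, hdar, hda2,
            Finset.empty_union]
        · rw [hop, hsplit, P.op_assoc _ _ _ hdar hda2 hdr2]
      rw [hsupp, Finset.mem_union] at hx
      rcases hx with hx1 | hx2
      · exact key ω₁ ω₂ hd hop h2 hx1
      · refine key ω₂ ω₁ ?_ ?_ h1 hx2
        · rw [Finset.inter_comm]; exact hd
        · rw [hop, P.op_comm _ _ hd]

end ExpAux

namespace ExpAux2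
open Finset ExpAux

variable {S : Type*} {R : Type*} [CommRing R] [Algebra ℚ R]

/-- The recursively defined sequence `u`. -/
noncomputable def expRec (A : ℕ → R) : ℕ → R
  | 0 => 1
  | (n+1) => ∑ j ∈ Finset.range (n+1), (n.choose j) • (A (j+1) * expRec A (n - j))
  termination_by n => n
  decreasing_by exact Nat.lt_succ_of_le (Nat.sub_le n _)

lemma expRec_zero (A : ℕ → R) : expRec A 0 = 1 := by rw [expRec]

lemma expRec_succ (A : ℕ → R) (n : ℕ) :
    expRec A (n + 1)
      = ∑ j ∈ Finset.range (n + 1), (n.choose j) • (A (j + 1) * expRec A (n - j)) := by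
  rw [expRec]

variable (P : SFD S) (hlf : ∀ F : Finset ℕ+, {ω : S | P.supp ω = F}.Finite) (c : S → R)

/-- Elements with support `F`, as a finset. -/
noncomputable def sset (F : Finset ℕ+) : Finset S := (hlf F).toFinset

/-- Atoms with support `F`, as a finset. -/
noncomputable def aset (F : Finset ℕ+) : Finset S :=
  (Set.Finite.subset (hlf F) (fun w hw => hw.2 :
    {w : S | P.IsAtom w ∧ P.supp w = F} ⊆ {ω : S | P.supp ω = F})).toFinset

lemma mem_sset {F : Finset ℕ+} {ω : S} : ω ∈ sset P hlf F ↔ P.supp ω = F := by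
  simp [sset]

lemma mem_aset {F : Finset ℕ+} {ω : S} :
    ω ∈ aset P hlf F ↔ P.IsAtom ω ∧ P.supp ω = F := by
  simp [aset]

noncomputable def sS (F : Finset ℕ+) : R := ∑ ω ∈ sset P hlf F, c ω
noncomputable def aS (F : Finset ℕ+) : R := ∑ ω ∈ aset P hlf F, c ω

lemma sS_empty : sS P hlf c ∅ = c P.eps := by
  rw [sS]
  have : sset P hlf ∅ = {P.eps} := by
    ext ω; rw [mem_sset, Finset.mem_singleton, P.supp_eq_empty]
  rw [this, Finset.sum_singleton]

lemma aS_empty : aS P hlf c ∅ = 0 := by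
  rw [aS]
  have : aset P hlf ∅ = ∅ := by
    ext ω
    simp only [mem_aset, Finset.notMem_empty, iff_false]
    rintro ⟨hat, hs⟩
    exact atom_supp_ne P hat hs
  rw [this, Finset.sum_empty]

variable (hmul : ∀ ω₁ ω₂ : S, P.supp ω₁ ∩ P.supp ω₂ = ∅ →
      c (P.op ω₁ ω₂) = c ω₁ * c ω₂)

include hmul in
lemma c_absorb (a : S) : c a * c P.eps = c a := by
  have := hmul a P.eps (by rw [supp_eps, Finset.inter_empty])
  rw [P.op_eps] at this
  exact this.symm

include hmul in
/-- The key recursion for `sS`. -/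
lemma sS_rec {F : Finset ℕ+} {x : ℕ+} (hx : x ∈ F) :
    sS P hlf c F
      = ∑ B ∈ F.powerset.filter (fun B => x ∈ B), aS P hlf c B * sS P hlf c (F \ B) := by
  -- rewrite each product of sums as a double sum
  have hrhs : ∀ B : Finset ℕ+,
      aS P hlf c B * sS P hlf c (F \ B)
        = ∑ p ∈ aset P hlf B ×ˢ sset P hlf (F \ B), c p.1 * c p.2 := by
    intro B
    rw [aS, sS, Finset.sum_mul_sum, Finset.sum_product]
  simp_rw [hrhs]
  rw [Finset.sum_sigma']
  symm
  refine Finset.sum_bij (fun p _ => P.op p.2.1 p.2.2) ?_ ?_ ?_ ?_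
  · -- maps into sset F
    rintro ⟨B, a, r⟩ hp
    simp only [Finset.mem_sigma, Finset.mem_filter, Finset.mem_powerset, Finset.mem_product,
      mem_aset, mem_sset] at hp
    obtain ⟨⟨hBF, hxB⟩, ⟨hat, hsa⟩, hsr⟩ := hp
    have hd : P.supp a ∩ P.supp r = ∅ := by
      rw [hsa, hsr]
      exact Finset.inter_sdiff_self _ _
    rw [mem_sset, P.supp_op _ _ hd, hsa, hsr, Finset.union_sdiff_of_subset hBF]
  · -- injective
    rintro ⟨B₁, a₁, r₁⟩ hp₁ ⟨B₂, a₂, r₂⟩ hp₂ heq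
    simp only [Finset.mem_sigma, Finset.mem_filter, Finset.mem_powerset, Finset.mem_product,
      mem_aset, mem_sset] at hp₁ hp₂
    obtain ⟨⟨hBF₁, hxB₁⟩, ⟨hat₁, hsa₁⟩, hsr₁⟩ := hp₁
    obtain ⟨⟨hBF₂, hxB₂⟩, ⟨hat₂, hsa₂⟩, hsr₂⟩ := hp₂
    have hd₁ : P.supp a₁ ∩ P.supp r₁ = ∅ := by
      rw [hsa₁, hsr₁]; exact Finset.inter_sdiff_self _ _
    have hd₂ : P.supp a₂ ∩ P.supp r₂ = ∅ := by
      rw [hsa₂, hsr₂]; exact Finset.inter_sdiff_self _ _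
    obtain ⟨hae, hre⟩ := unique_split P hat₁ hat₂ (hsa₁ ▸ hxB₁) (hsa₂ ▸ hxB₂) hd₁ hd₂ heq
    have hBe : B₁ = B₂ := by rw [← hsa₁, ← hsa₂, hae]
    subst hBe hae hre
    rfl
  · -- surjective
    intro ω hω
    rw [mem_sset] at hω
    have hxω : x ∈ P.supp ω := hω ▸ hx
    obtain ⟨a, r, hat, hxa, hd, hsplit⟩ :=
      exists_split P (P.supp ω).card ω le_rfl x hxω
    have hsupp : P.supp ω = P.supp a ∪ P.supp r := by rw [hsplit, P.supp_op _ _ hd]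
    refine ⟨⟨P.supp a, a, r⟩, ?_, hsplit.symm⟩
    simp only [Finset.mem_sigma, Finset.mem_filter, Finset.mem_powerset, Finset.mem_product,
      mem_aset, mem_sset]
    refine ⟨⟨?_, hxa⟩, ⟨hat, trivial⟩, ?_⟩
    · rw [← hω, hsupp]; exact Finset.subset_union_left
    · -- supp r = F \ supp a
      rw [← hω, hsupp]
      ext y
      simp only [Finset.mem_sdiff, Finset.mem_union]
      constructor
      · intro hy
        refine ⟨Or.inr hy, fun hya => ?_⟩
        have : y ∈ P.supp a ∩ P.supp r := Finset.mem_inter.mpr ⟨hya, hy⟩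
        rw [hd] at this; exact Finset.notMem_empty y this
      · rintro ⟨hy | hy, hna⟩
        · exact absurd hy hna
        · exact hy
  · -- values
    rintro ⟨B, a, r⟩ hp
    simp only [Finset.mem_sigma, Finset.mem_filter, Finset.mem_powerset, Finset.mem_product,
      mem_aset, mem_sset] at hp
    obtain ⟨⟨hBF, hxB⟩, ⟨hat, hsa⟩, hsr⟩ := hp
    have hd : P.supp a ∩ P.supp r = ∅ := by
      rw [hsa, hsr]; exact Finset.inter_sdiff_self _ _
    exact (hmul a r hd).symm


variable (heqv : ∀ F₁ F₂ : Finset ℕ+, F₁.card = F₂.card →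
      (∑ᶠ ω ∈ {w : S | P.IsAtom w ∧ P.supp w = F₁}, c ω)
        = ∑ᶠ ω ∈ {w : S | P.IsAtom w ∧ P.supp w = F₂}, c ω)

lemma aS_eq_finsum (F : Finset ℕ+) :
    aS P hlf c F = ∑ᶠ ω ∈ {w : S | P.IsAtom w ∧ P.supp w = F}, c ω := by
  rw [finsum_mem_eq_finite_toFinset_sum _ (Set.Finite.subset (hlf F) (fun w hw => hw.2))]
  rfl

include heqv in
lemma aS_card {F₁ F₂ : Finset ℕ+} (h : F₁.card = F₂.card) :
    aS P hlf c F₁ = aS P hlf c F₂ := by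
  rw [aS_eq_finsum, aS_eq_finsum]
  exact heqv _ _ h

include hmul heqv in
/-- The main structural induction: for nonempty `F`, `sS F = u (card F)`. -/
lemma sS_eq_expRec : ∀ n : ℕ, ∀ F : Finset ℕ+, F.card = n → F.Nonempty →
    sS P hlf c F = expRec (fun m => aS P hlf c (pInterval m)) n := by
  intro n
  induction n using Nat.strong_induction_on with
  | _ n ih =>
    intro F hcard hne
    obtain ⟨x, hx⟩ := hne
    have hn0 : n ≠ 0 := by
      rintro rfl
      rw [Finset.card_eq_zero] at hcard
      subst hcard
      exact Finset.notMem_empty x hx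
    obtain ⟨m, rfl⟩ := Nat.exists_eq_succ_of_ne_zero hn0
    set A : ℕ → R := fun m => aS P hlf c (pInterval m) with hA
    rw [sS_rec P hlf c hmul hx]
    have hterm : ∀ B ∈ F.powerset.filter (fun B => x ∈ B),
        aS P hlf c B * sS P hlf c (F \ B) = A B.card * expRec A (m + 1 - B.card) := by
      intro B hB
      simp only [Finset.mem_filter, Finset.mem_powerset] at hB
      obtain ⟨hBF, hxB⟩ := hB
      have hAB : aS P hlf c B = A B.card := by
        rw [hA]
        exact aS_card P hlf c heqv (by rw [card_pInterval])
      by_cases hBeq : B = F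
      · subst hBeq
        have habs : aS P hlf c B * c P.eps = aS P hlf c B := by
          rw [aS, Finset.sum_mul]
          exact Finset.sum_congr rfl fun ω _ => c_absorb P c hmul ω
        rw [Finset.sdiff_self, sS_empty, habs, hAB, hcard, Nat.sub_self, expRec_zero, mul_one]
      · have hssub : B ⊂ F := HasSubset.Subset.ssubset_of_ne hBF hBeq
        have hcardB : B.card < m + 1 := by
          have := Finset.card_lt_card hssub
          omega
        have hcards : (F \ B).card = m + 1 - B.card := by
          rw [Finset.card_sdiff_of_subset hBF, hcard]
        have hFBne : (F \ B).Nonempty := by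
          rw [← Finset.card_pos, hcards]
          omega
        have hpos : 1 ≤ B.card := Finset.card_pos.mpr ⟨x, hxB⟩
        rw [ih (m + 1 - B.card) (by omega) (F \ B) hcards hFBne, hAB]
    rw [Finset.sum_congr rfl hterm]
    -- reindex over subsets of F.erase x
    have hre : ∑ B ∈ F.powerset.filter (fun B => x ∈ B), A B.card * expRec A (m + 1 - B.card)
        = ∑ C ∈ (F.erase x).powerset, A (C.card + 1) * expRec A (m - C.card) := by
      refine Finset.sum_nbij' (fun B => B.erase x) (fun C => insert x C) ?_ ?_ ?_ ?_ ?_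
      · intro B hB
        simp only [Finset.mem_filter, Finset.mem_powerset] at hB ⊢
        exact Finset.erase_subset_erase x hB.1
      · intro C hC
        simp only [Finset.mem_filter, Finset.mem_powerset] at hC ⊢
        constructor
        · intro y hy
          rcases Finset.mem_insert.mp hy with rfl | hy
          · exact hx
          · exact Finset.erase_subset x F (hC hy)
        · exact Finset.mem_insert_self x C
      · intro B hB
        simp only [Finset.mem_filter, Finset.mem_powerset] at hB
        exact Finset.insert_erase hB.2
      · intro C hC
        simp only [Finset.mem_powerset] at hC
        refine Finset.erase_insert (fun hxC => ?_)
        exact Finset.notMem_erase x F (hC hxC)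
      · intro B hB
        simp only [Finset.mem_filter, Finset.mem_powerset] at hB
        have hpos : 1 ≤ B.card := Finset.card_pos.mpr ⟨x, hB.2⟩
        rw [Finset.card_erase_of_mem hB.2]
        have e1 : B.card - 1 + 1 = B.card := by omega
        have e2 : m - (B.card - 1) = m + 1 - B.card := by omega
        rw [e1, e2]
    rw [hre]
    have hcerase : (F.erase x).card = m := by
      rw [Finset.card_erase_of_mem hx, hcard]
      omega
    have := Finset.sum_powerset_apply_card
      (fun j => A (j + 1) * expRec A (m - j)) (x := F.erase x)
    rw [this, hcerase, expRec_succ]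

open PowerSeries

lemma scal_helper (q1 q2 q3 : ℚ) (m : ℕ) (a b : R) :
    q1 • ((q2 • a) * ((q3 • b) * (m : R))) = (q1 * (q2 * (q3 * m))) • (a * b) := by
  simp only [Algebra.smul_def, map_mul, map_natCast]
  ring

lemma scal_helper2 (q : ℚ) (m : ℕ) (x : R) : q • (m • x) = (q * m) • x := by
  rw [← Nat.cast_smul_eq_nsmul ℚ, smul_smul]

variable (g : PowerSeries R)

lemma coeff_pow_eq_zero (hg : PowerSeries.constantCoeff g = 0) :
    ∀ k n : ℕ, n < k → PowerSeries.coeff n (g ^ k) = 0 := by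
  intro k
  induction k with
  | zero => intro n hn; omega
  | succ k ih =>
    intro n hn
    rw [pow_succ, PowerSeries.coeff_mul]
    apply Finset.sum_eq_zero
    rintro ⟨i, j⟩ hp
    rw [Finset.HasAntidiagonal.mem_antidiagonal] at hp
    rcases Nat.eq_zero_or_pos j with hj | hj
    · subst hj
      rw [PowerSeries.coeff_zero_eq_constantCoeff, hg, mul_zero]
    · have : i < k := by omega
      rw [ih i this, zero_mul]

lemma coeff_expPS (hg : PowerSeries.constantCoeff g = 0) (n : ℕ) :
    PowerSeries.coeff n (expPS g)
      = ∑ k ∈ Finset.range (n + 1),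
          ((k.factorial : ℚ)⁻¹) • PowerSeries.coeff n (g ^ k) := by
  rw [expPS, PowerSeries.coeff_mk]
  apply finsum_eq_sum_of_support_subset
  intro k hk
  simp only [Function.mem_support, ne_eq] at hk
  simp only [Finset.coe_range, Set.mem_Iio]
  by_contra hlt
  push_neg at hlt
  rw [coeff_pow_eq_zero g hg k n (by omega), smul_zero] at hk
  exact hk rfl

lemma dpow (k : ℕ) :
    PowerSeries.derivativeFun (g ^ (k + 1))
      = (k + 1) • (g ^ k * PowerSeries.derivativeFun g) := by
  induction k with
  | zero =>
    rw [pow_one, pow_zero, one_mul]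
    norm_num
  | succ k ih =>
    have key : g ^ (k + 1) * g.derivativeFun + g * ((k + 1) • (g ^ k * g.derivativeFun))
        = (k + 1 + 1) • (g ^ (k + 1) * g.derivativeFun) := by
      have e1 : (k + 1 + 1) • (g ^ (k + 1) * g.derivativeFun)
          = (k + 1) • (g ^ (k + 1) * g.derivativeFun) + g ^ (k + 1) * g.derivativeFun :=
        succ_nsmul _ _
      rw [mul_smul_comm,
        show g * (g ^ k * g.derivativeFun) = g ^ (k + 1) * g.derivativeFun from by ring,
        e1]
      exact add_comm _ _
    rw [pow_succ, PowerSeries.derivativeFun_mul, ih, smul_eq_mul, smul_eq_mul]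
    exact key

lemma keyB (n k : ℕ) :
    (((n + 1 : ℕ)) : ℚ) • (((k + 1).factorial : ℚ)⁻¹
        • PowerSeries.coeff (n + 1) (g ^ (k + 1)))
      = ((k.factorial : ℚ))⁻¹
        • PowerSeries.coeff n (g ^ k * PowerSeries.derivativeFun g) := by
  have h1 : PowerSeries.coeff n (PowerSeries.derivativeFun (g ^ (k + 1)))
      = PowerSeries.coeff (n + 1) (g ^ (k + 1)) * (((n + 1 : ℕ)) : R) := by
    rw [show ∀ f : PowerSeries R, PowerSeries.derivativeFun f = PowerSeries.derivative R f from fun _ => rfl, PowerSeries.coeff_derivativeFun]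
    push_cast
    ring
  have h2 : PowerSeries.coeff n (PowerSeries.derivativeFun (g ^ (k + 1)))
      = (k + 1) • PowerSeries.coeff n (g ^ k * PowerSeries.derivativeFun g) := by
    rw [dpow, map_nsmul]
  have h3 : (((n + 1 : ℕ)) : ℚ) • PowerSeries.coeff (n + 1) (g ^ (k + 1))
      = (k + 1) • PowerSeries.coeff n (g ^ k * PowerSeries.derivativeFun g) := by
    rw [Algebra.smul_def, map_natCast, mul_comm, ← h1, h2]
  rw [smul_comm, h3, scal_helper2]
  congr 1
  have hfk : (k.factorial : ℚ) ≠ 0 := by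
    exact_mod_cast (Nat.factorial_pos k).ne'
  have hk1 : ((k + 1 : ℕ) : ℚ) ≠ 0 := by positivity
  rw [Nat.factorial_succ]
  push_cast
  field_simp

lemma exp_rec (hg : PowerSeries.constantCoeff g = 0) (n : ℕ) :
    (n + 1) • PowerSeries.coeff (n + 1) (expPS g)
      = ∑ p ∈ Finset.HasAntidiagonal.antidiagonal n,
          PowerSeries.coeff p.1 (expPS g)
            * (PowerSeries.coeff (p.2 + 1) g * ((p.2 + 1 : ℕ) : R)) := by
  rw [← Nat.cast_smul_eq_nsmul ℚ, coeff_expPS g hg, Finset.sum_range_succ',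
    Nat.factorial_zero, pow_zero, PowerSeries.coeff_one, if_neg (Nat.succ_ne_zero n),
    smul_zero, add_zero, Finset.smul_sum]
  push_cast
  have step1 : ∀ k ∈ Finset.range (n + 1),
      ((n : ℚ) + 1) • (((k + 1).factorial : ℚ)⁻¹ • PowerSeries.coeff (n + 1) (g ^ (k + 1)))
        = ((k.factorial : ℚ))⁻¹
            • PowerSeries.coeff n (g ^ k * PowerSeries.derivativeFun g) := by
    intro k _
    have := keyB g n k
    push_cast at this
    exact this
  rw [Finset.sum_congr rfl step1]
  have step2 : ∀ k ∈ Finset.range (n + 1),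
      ((k.factorial : ℚ))⁻¹ • PowerSeries.coeff n (g ^ k * PowerSeries.derivativeFun g)
        = ∑ p ∈ Finset.HasAntidiagonal.antidiagonal n,
            (((k.factorial : ℚ))⁻¹ • PowerSeries.coeff p.1 (g ^ k))
              * PowerSeries.coeff p.2 (PowerSeries.derivativeFun g) := by
    intro k _
    rw [PowerSeries.coeff_mul, Finset.smul_sum]
    exact Finset.sum_congr rfl fun p _ => (smul_mul_assoc _ _ _).symm
  rw [Finset.sum_congr rfl step2, Finset.sum_comm]
  refine Finset.sum_congr rfl fun p hp => ?_
  rw [Finset.HasAntidiagonal.mem_antidiagonal] at hp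
  rw [← Finset.sum_mul]
  have h1 : ∑ k ∈ Finset.range (n + 1), ((k.factorial : ℚ))⁻¹ • PowerSeries.coeff p.1 (g ^ k)
      = PowerSeries.coeff p.1 (expPS g) := by
    rw [coeff_expPS g hg]
    symm
    apply Finset.sum_subset
    · intro k hk
      rw [Finset.mem_range] at hk ⊢
      omega
    · intro k _ hk
      rw [Finset.mem_range] at hk
      push_neg at hk
      rw [coeff_pow_eq_zero g hg k p.1 (by omega), smul_zero]
  have h2 : PowerSeries.coeff p.2 (PowerSeries.derivativeFun g)
      = PowerSeries.coeff (p.2 + 1) g * ((p.2 + 1 : ℕ) : R) := by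
    rw [show ∀ f : PowerSeries R, PowerSeries.derivativeFun f = PowerSeries.derivative R f from fun _ => rfl, PowerSeries.coeff_derivativeFun]
    push_cast
    ring
  rw [h1, h2]
  push_cast
  ring

lemma qfact (n j : ℕ) (hj : j ≤ n) :
    (((n + 1 : ℕ)) : ℚ)⁻¹ * ((((n - j).factorial : ℕ) : ℚ)⁻¹
        * ((((j + 1).factorial : ℕ) : ℚ)⁻¹ * ((j + 1 : ℕ) : ℚ)))
      = ((((n + 1).factorial : ℕ)) : ℚ)⁻¹ * ((n.choose j : ℕ) : ℚ) := by
  have hcf : n.choose j * j.factorial * (n - j).factorial = n.factorial :=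
    Nat.choose_mul_factorial_mul_factorial hj
  have hq : (n.factorial : ℚ) = (n.choose j : ℚ) * (j.factorial : ℚ) * ((n - j).factorial : ℚ) := by
    exact_mod_cast hcf.symm
  have h1 : (((j + 1).factorial : ℕ) : ℚ) = ((j + 1 : ℕ) : ℚ) * (j.factorial : ℚ) := by
    rw [Nat.factorial_succ]; push_cast; ring
  have h2 : (((n + 1).factorial : ℕ) : ℚ) = ((n + 1 : ℕ) : ℚ) * (n.factorial : ℚ) := by
    rw [Nat.factorial_succ]; push_cast; ring
  have f1 : (j.factorial : ℚ) ≠ 0 := by exact_mod_cast j.factorial_pos.ne'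
  have f2 : ((n - j).factorial : ℚ) ≠ 0 := by exact_mod_cast (n - j).factorial_pos.ne'
  have f3 : ((j + 1 : ℕ) : ℚ) ≠ 0 := by positivity
  have f4 : ((n + 1 : ℕ) : ℚ) ≠ 0 := by positivity
  have f5 : ((n.choose j : ℕ) : ℚ) ≠ 0 := by
    exact_mod_cast (Nat.choose_pos hj).ne'
  rw [h1, h2, hq]
  field_simp

lemma exp_coeff (g : PowerSeries R) (A : ℕ → R)
    (hg : PowerSeries.constantCoeff g = 0)
    (hc : ∀ m, PowerSeries.coeff m g = ((m.factorial : ℚ))⁻¹ • A m) :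
    ∀ n, PowerSeries.coeff n (expPS g) = ((n.factorial : ℚ))⁻¹ • expRec A n := by
  intro n
  induction n using Nat.strong_induction_on with
  | _ n ih =>
    match n with
    | 0 =>
      rw [coeff_expPS g hg, expRec_zero]
      simp
    | (n + 1) =>
      have hrec := exp_rec g hg n
      have hne : (((n + 1 : ℕ)) : ℚ) ≠ 0 := by positivity
      have hstart : PowerSeries.coeff (n + 1) (expPS g)
          = (((n + 1 : ℕ)) : ℚ)⁻¹ • ((n + 1) • PowerSeries.coeff (n + 1) (expPS g)) := by
        rw [← Nat.cast_smul_eq_nsmul ℚ, smul_smul, inv_mul_cancel₀ hne, one_smul]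
      rw [hstart, hrec, Finset.Nat.sum_antidiagonal_eq_sum_range_succ_mk,
        ← Finset.sum_range_reflect, Finset.smul_sum]
      rw [expRec_succ, Finset.smul_sum]
      refine Finset.sum_congr rfl fun j hj => ?_
      rw [Finset.mem_range] at hj
      have hjn : j ≤ n := by omega
      have i1 : n + 1 - 1 - j = n - j := by omega
      have i2 : n - (n - j) = j := by omega
      simp only [i1, i2]
      rw [ih (n - j) (by omega), hc (j + 1), scal_helper, scal_helper2,
        mul_comm (expRec A (n - j)) (A (j + 1))]
      congr 1
      exact qfact n j hjn

end ExpAux2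

/-- exponential formula: for a locally finite SFD partial
semigroup and a multiplicative equivariant statistics `c`,
`EGF(S; z) = (c(ε) − 1) + exp(EGF(atoms(S); z))` in `R[[z]]`. -/
theorem exponential_formula {S : Type*} {R : Type*} [CommRing R]
    [Algebra ℚ R] (P : SFD S)
    (hlf : ∀ F : Finset ℕ+, {ω : S | P.supp ω = F}.Finite)
    (c : S → R)
    (hmul : ∀ ω₁ ω₂ : S, P.supp ω₁ ∩ P.supp ω₂ = ∅ →
      c (P.op ω₁ ω₂) = c ω₁ * c ω₂)
    (heqv : ∀ F₁ F₂ : Finset ℕ+, F₁.card = F₂.card →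
      (∑ᶠ ω ∈ {w : S | P.IsAtom w ∧ P.supp w = F₁}, c ω)
        = ∑ᶠ ω ∈ {w : S | P.IsAtom w ∧ P.supp w = F₂}, c ω) :
    EGF P c Set.univ
      = PowerSeries.C (c P.eps - 1) + expPS (EGF P c {w : S | P.IsAtom w}) := by
  classical
  set A : ℕ → R := fun m => ExpAux2.aS P hlf c (pInterval m) with hA
  set g : PowerSeries R := EGF P c {w : S | P.IsAtom w} with hgdef
  have hsep : ∀ F : Finset ℕ+, {w ∈ {w : S | P.IsAtom w} | P.supp w = F}
      = {w : S | P.IsAtom w ∧ P.supp w = F} := fun F => rfl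
  have hcg : ∀ m : ℕ, PowerSeries.coeff m g = ((m.factorial : ℚ))⁻¹ • A m := by
    intro m
    rw [hgdef, EGF, PowerSeries.coeff_mk, hsep, ← ExpAux2.aS_eq_finsum P hlf c]
  have hg0 : PowerSeries.constantCoeff g = 0 := by
    rw [← PowerSeries.coeff_zero_eq_constantCoeff, hcg 0]
    have : A 0 = 0 := by
      rw [hA]
      show ExpAux2.aS P hlf c (pInterval 0) = 0
      rw [ExpAux.pInterval_zero, ExpAux2.aS_empty]
    rw [this, smul_zero]
  have hL : ∀ n : ℕ, PowerSeries.coeff n (EGF P c Set.univ)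
      = ((n.factorial : ℚ))⁻¹ • ExpAux2.sS P hlf c (pInterval n) := by
    intro n
    rw [EGF, PowerSeries.coeff_mk]
    congr 1
    have hsu : {w ∈ (Set.univ : Set S) | P.supp w = pInterval n}
        = {w : S | P.supp w = pInterval n} := by
      ext w; simp
    rw [hsu, finsum_mem_eq_finite_toFinset_sum _ (hlf (pInterval n))]
    rfl
  ext n
  rw [map_add, hL n]
  cases n with
  | zero =>
    rw [ExpAux.pInterval_zero, ExpAux2.sS_empty, PowerSeries.coeff_zero_C,
      ExpAux2.exp_coeff g A hg0 hcg 0, ExpAux2.expRec_zero]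
    norm_num
  | succ n =>
    rw [ExpAux2.exp_coeff g A hg0 hcg (n + 1), PowerSeries.coeff_C,
      if_neg (Nat.succ_ne_zero n), zero_add,
      ExpAux2.sS_eq_expRec P hlf c hmul heqv (n + 1) (pInterval (n + 1))
        (ExpAux.card_pInterval (n + 1)) (ExpAux.pInterval_nonempty (Nat.succ_ne_zero n))]
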